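/- Single-reactant Patankar system positivity: assume every reaction k has exactly one reactant, so the system reads v_i^{1/q_i} + Σ_j 𝕄_{ij} v_j = a_i (i = 1,…,N), where a_i > 0, q_i > 0, 𝕄 has nonnegative diagonal, nonpositive off-diagonal entries, and is column diagonally dominant (𝕄_{ii} ≥ Σ_{j≠i} |𝕄_{ji}|). Then this system has a solution with all v_i > 0, and this positive solution is unique. -/
import Mathlib

lemma srp_cont (p c : ℝ) (hp : 0 < p) : Continuous fun t : ℝ => t ^ p + c * t :=
  (continuous_iff_continuousAt.mpr fun x =>
    Real.continuousAt_rpow_const x p (Or.inr hp.le)).add (continuous_const.mul continuous_id)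

lemma srp_smono (p c : ℝ) (hp : 0 < p) (hc : 0 ≤ c) {x y : ℝ} (hx : 0 ≤ x) (hxy : x < y) :
    x ^ p + c * x < y ^ p + c * y :=
  add_lt_add_of_lt_of_le (Real.rpow_lt_rpow hx hxy hp)
    (mul_le_mul_of_nonneg_left hxy.le hc)

lemma srp_exu (p c r : ℝ) (hp : 0 < p) (hc : 0 ≤ c) (hr : 0 < r) :
    ∃! t : ℝ, 0 < t ∧ t ^ p + c * t = r := by
  set f : ℝ → ℝ := fun t => t ^ p + c * t with hf
  have hf0 : f 0 = 0 := by simp [hf, Real.zero_rpow hp.ne']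
  have hR0 : (0:ℝ) ≤ r ^ p⁻¹ := Real.rpow_nonneg hr.le _
  have hfR : r ≤ f (r ^ p⁻¹) := by
    have : (r ^ p⁻¹) ^ p = r := Real.rpow_inv_rpow hr.le hp.ne'
    have h2 : 0 ≤ c * r ^ p⁻¹ := mul_nonneg hc hR0
    simp only [hf]; rw [this]; linarith
  obtain ⟨t, ht, hft⟩ :=
    intermediate_value_Icc hR0 ((srp_cont p c hp).continuousOn)
      ⟨by simpa [Real.zero_rpow hp.ne'] using hr.le, hfR⟩
  simp only at hft
  have htpos : 0 < t := by
    rcases ht.1.lt_or_eq with h | h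
    · exact h
    · exfalso
      rw [← h, Real.zero_rpow hp.ne'] at hft
      simp at hft; linarith
  refine ⟨t, ⟨htpos, hft⟩, ?_⟩
  rintro s ⟨hs, hfs⟩
  rcases lt_trichotomy s t with h | h | h
  · have := srp_smono p c hp hc hs.le h; rw [hfs, hft] at this; linarith
  · exact h
  · have := srp_smono p c hp hc htpos.le h; rw [hfs, hft] at this; linarith

noncomputable def srpSol (p c r : ℝ) : ℝ :=
  if h : 0 < p ∧ 0 ≤ c ∧ 0 < r then (srp_exu p c r h.1 h.2.1 h.2.2).exists.choose else 0

lemma srpSol_spec {p c r : ℝ} (hp : 0 < p) (hc : 0 ≤ c) (hr : 0 < r) :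
    0 < srpSol p c r ∧ (srpSol p c r) ^ p + c * srpSol p c r = r := by
  rw [srpSol, dif_pos ⟨hp, hc, hr⟩]
  exact (srp_exu p c r hp hc hr).exists.choose_spec

lemma srpSol_mono {p c r₁ r₂ : ℝ} (hp : 0 < p) (hc : 0 ≤ c) (hr₁ : 0 < r₁) (hr₂ : 0 < r₂)
    (h : r₁ ≤ r₂) : srpSol p c r₁ ≤ srpSol p c r₂ := by
  have h1 := srpSol_spec hp hc hr₁
  have h2 := srpSol_spec hp hc hr₂
  by_contra hlt
  push_neg at hlt
  have := srp_smono p c hp hc h2.1.le hlt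
  rw [h1.2, h2.2] at this; linarith

/-- Positivity for the single-reactant Patankar system: the system
`v_i^(1/q_i) + Σ_j 𝕄_{ij} v_j = a_i` with a column diagonally dominant
M-matrix `𝕄` and positive right-hand side has a unique positive solution. -/
theorem single_reactant_patankar_positivity (N : ℕ) (M : Matrix (Fin N) (Fin N) ℝ)
    (a q : Fin N → ℝ) (ha : ∀ i, 0 < a i) (hq : ∀ i, 0 < q i)
    (hdiag : ∀ i, 0 ≤ M i i)
    (hoff : ∀ i j, i ≠ j → M i j ≤ 0)
    (hdom : ∀ i, ∑ j ∈ Finset.univ.filter (fun j => j ≠ i), |M j i| ≤ M i i) :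
    ∃! v : Fin N → ℝ,
      (∀ i, 0 < v i) ∧
        ∀ i, (v i) ^ (1 / q i) + ∑ j, M i j * v j = a i := by
  classical
  have hp : ∀ i, 0 < 1 / q i := fun i => one_div_pos.mpr (hq i)
  -- rewrite hdom with erase
  have hdom' : ∀ i, ∑ j ∈ Finset.univ.erase i, |M j i| ≤ M i i := by
    intro i
    have := hdom i
    rwa [Finset.filter_ne'] at this
  -- Uniqueness of positive solutions
  have uniq : ∀ x y : Fin N → ℝ, (∀ i, 0 < x i) →
      (∀ i, x i ^ (1 / q i) + ∑ j, M i j * x j = a i) → (∀ i, 0 < y i) →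
      (∀ i, y i ^ (1 / q i) + ∑ j, M i j * y j = a i) → x = y := by
    intro x y hx hxe hy hye
    set w : Fin N → ℝ := fun i => x i - y i with hw
    set s : Fin N → ℝ := fun i => if w i < 0 then -1 else 1 with hs
    set T1 : Fin N → ℝ := fun i => s i * (x i ^ (1 / q i) - y i ^ (1 / q i)) with hT1def
    set T2 : Fin N → ℝ := fun j => w j * ∑ i, s i * M i j with hT2def
    have hdiff : ∀ i, (x i ^ (1 / q i) - y i ^ (1 / q i)) + ∑ j, M i j * w j = 0 := by
      intro i
      have hsub : ∑ j, M i j * w j = (∑ j, M i j * x j) - ∑ j, M i j * y j := by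
        rw [← Finset.sum_sub_distrib]
        exact Finset.sum_congr rfl fun j _ => by simp only [hw]; ring
      rw [hsub]
      linarith [hxe i, hye i]
    have hswap : ∑ i, s i * ∑ j, M i j * w j = ∑ j, T2 j := by
      simp only [Finset.mul_sum, hT2def]
      rw [Finset.sum_comm]
      exact Finset.sum_congr rfl fun j _ => Finset.sum_congr rfl fun i _ => by ring
    have hsum : ∑ i, T1 i + ∑ j, T2 j = 0 := by
      rw [← hswap, ← Finset.sum_add_distrib]
      apply Finset.sum_eq_zero
      intro i _
      have h0 : s i * ((x i ^ (1 / q i) - y i ^ (1 / q i)) + ∑ j, M i j * w j) = 0 := by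
        rw [hdiff i]; ring
      simp only [hT1def]
      rw [← mul_add]
      exact h0
    have hT1 : ∀ i, 0 ≤ T1 i := by
      intro i
      simp only [hT1def, hs]
      by_cases h : w i < 0
      · have hxy : x i < y i := by simp only [hw] at h; linarith
        have : x i ^ (1 / q i) < y i ^ (1 / q i) :=
          Real.rpow_lt_rpow (hx i).le hxy (hp i)
        rw [if_pos h]; nlinarith
      · have hxy : y i ≤ x i := by simp only [hw] at h; push_neg at h; linarith
        have : y i ^ (1 / q i) ≤ x i ^ (1 / q i) :=
          Real.rpow_le_rpow (hy i).le hxy (hp i).le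
        rw [if_neg h]; nlinarith
    have hT1strict : ∀ i, w i ≠ 0 → 0 < T1 i := by
      intro i hwi
      simp only [hT1def, hs]
      by_cases h : w i < 0
      · have hxy : x i < y i := by simp only [hw] at h ⊢; linarith
        have : x i ^ (1 / q i) < y i ^ (1 / q i) :=
          Real.rpow_lt_rpow (hx i).le hxy (hp i)
        rw [if_pos h]; nlinarith
      · have hxy : y i < x i := by
          simp only [hw] at h hwi; push_neg at h
          rcases h.lt_or_eq with h' | h'
          · linarith
          · exact absurd h'.symm (by simpa [sub_eq_zero] using hwi)
        have : y i ^ (1 / q i) < x i ^ (1 / q i) :=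
          Real.rpow_lt_rpow (hy i).le hxy (hp i)
        rw [if_neg h]; nlinarith
    have habs : ∀ i j, |s i * M i j| = |M i j| := by
      intro i j
      rw [abs_mul]
      have : |s i| = 1 := by simp only [hs]; split <;> simp
      rw [this, one_mul]
    have hT2 : ∀ j, 0 ≤ T2 j := by
      intro j
      simp only [hT2def]
      have hsplit : ∑ i, s i * M i j = s j * M j j + ∑ i ∈ Finset.univ.erase j, s i * M i j :=
        (Finset.add_sum_erase _ _ (Finset.mem_univ j)).symm
      have hbound : |∑ i ∈ Finset.univ.erase j, s i * M i j| ≤ M j j := by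
        calc |∑ i ∈ Finset.univ.erase j, s i * M i j|
            ≤ ∑ i ∈ Finset.univ.erase j, |s i * M i j| := Finset.abs_sum_le_sum_abs _ _
          _ = ∑ i ∈ Finset.univ.erase j, |M i j| := Finset.sum_congr rfl fun i _ => habs i j
          _ ≤ M j j := hdom' j
      rw [hsplit]
      have habs' := abs_le.mp hbound
      by_cases h : w j < 0
      · have hsj : s j = -1 := by simp only [hs]; rw [if_pos h]
        rw [hsj]
        have : -M j j + ∑ i ∈ Finset.univ.erase j, s i * M i j ≤ 0 := by linarith [habs'.2]
        nlinarith
      · have hsj : s j = 1 := by simp only [hs]; rw [if_neg h]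
        push_neg at h
        rw [hsj]
        have : 0 ≤ M j j + ∑ i ∈ Finset.univ.erase j, s i * M i j := by linarith [habs'.1]
        nlinarith
    have hS1 : ∑ i, T1 i = 0 := by
      have h1 : 0 ≤ ∑ i, T1 i := Finset.sum_nonneg fun i _ => hT1 i
      have h2 : 0 ≤ ∑ j, T2 j := Finset.sum_nonneg fun j _ => hT2 j
      linarith
    have hT1zero := (Finset.sum_eq_zero_iff_of_nonneg fun i _ => hT1 i).mp hS1
    funext i
    have : w i = 0 := by
      by_contra hwi
      exact absurd (hT1zero i (Finset.mem_univ i)) (hT1strict i hwi).ne'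
    simpa [hw, sub_eq_zero] using this
  -- Existence via monotone iteration
  set R : (Fin N → ℝ) → Fin N → ℝ :=
    fun v i => a i - ∑ j ∈ Finset.univ.filter (fun j => j ≠ i), M i j * v j with hRdef
  set G : (Fin N → ℝ) → Fin N → ℝ :=
    fun v i => srpSol (1 / q i) (M i i) (max (a i) (R v i)) with hGdef
  have hRmax : ∀ v i, 0 < max (a i) (R v i) := fun v i => lt_max_of_lt_left (ha i)
  have hGspec : ∀ v i, 0 < G v i ∧
      (G v i) ^ (1 / q i) + M i i * G v i = max (a i) (R v i) :=
    fun v i => srpSol_spec (hp i) (hdiag i) (hRmax v i)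
  have hGmono : ∀ v w : Fin N → ℝ, (∀ j, v j ≤ w j) → ∀ i, G v i ≤ G w i := by
    intro v w hvw i
    apply srpSol_mono (hp i) (hdiag i) (hRmax v i) (hRmax w i)
    apply max_le_max le_rfl
    simp only [hRdef]
    have : ∀ j ∈ Finset.univ.filter (fun j => j ≠ i), M i j * w j ≤ M i j * v j := by
      intro j hj
      have hji : j ≠ i := (Finset.mem_filter.mp hj).2
      exact mul_le_mul_of_nonpos_left (hvw j) (hoff i j (Ne.symm hji))
    linarith [Finset.sum_le_sum this]
  have hRcollapse : ∀ v : Fin N → ℝ, (∀ j, 0 ≤ v j) → ∀ i, max (a i) (R v i) = R v i := by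
    intro v hv i
    apply max_eq_right
    simp only [hRdef]
    have : ∑ j ∈ Finset.univ.filter (fun j => j ≠ i), M i j * v j ≤ 0 := by
      apply Finset.sum_nonpos
      intro j hj
      have hji : j ≠ i := (Finset.mem_filter.mp hj).2
      exact mul_nonpos_of_nonpos_of_nonneg (hoff i j (Ne.symm hji)) (hv j)
    linarith
  set u : ℕ → Fin N → ℝ := fun n => G^[n] (fun _ => 0) with hu
  have hu0 : u 0 = fun _ => 0 := rfl
  have husucc : ∀ n, u (n + 1) = G (u n) := fun n => Function.iterate_succ_apply' G n _
  have humono : ∀ n i, u n i ≤ u (n + 1) i := by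
    intro n
    induction n with
    | zero => intro i; rw [hu0, husucc]; exact (hGspec _ i).1.le
    | succ m ih =>
      intro i
      rw [husucc, husucc]
      exact hGmono _ _ ih i
  have hunn : ∀ n i, 0 ≤ u n i := by
    intro n
    induction n with
    | zero => intro i; rw [hu0]
    | succ m ih => intro i; rw [husucc]; exact (hGspec _ i).1.le
  have humono' : ∀ i, Monotone fun n => u n i :=
    fun i => monotone_nat_of_le_succ fun n => humono n i
  -- the equation satisfied along the iteration
  have huiter : ∀ n i, (u (n + 1) i) ^ (1 / q i) + M i i * u (n + 1) i
      + ∑ j ∈ Finset.univ.filter (fun j => j ≠ i), M i j * u n j = a i := by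
    intro n i
    have h1 := (hGspec (u n) i).2
    rw [hRcollapse (u n) (hunn n) i] at h1
    rw [← husucc n] at h1
    simp only [hRdef] at h1
    linarith
  -- a priori bound
  set A : ℝ := ∑ i, a i with hA
  have hbd : ∀ n i, (u (n + 1) i) ^ (1 / q i) ≤ A := by
    intro n i
    have key : ∑ i, (u (n + 1) i) ^ (1 / q i) ≤ A := by
      have h1 : ∑ i, ((u (n + 1) i) ^ (1 / q i) + M i i * u (n + 1) i
          + ∑ j ∈ Finset.univ.filter (fun j => j ≠ i), M i j * u n j) = A := by
        rw [hA]; exact Finset.sum_congr rfl fun i _ => huiter n i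
      -- handle the double sum
      have hsw : ∑ i, ∑ j ∈ Finset.univ.filter (fun j => j ≠ i), M i j * u n j
          = ∑ j, (∑ i ∈ Finset.univ.filter (fun i => i ≠ j), M i j) * u n j := by
        simp only [Finset.sum_filter, Finset.sum_mul]
        rw [Finset.sum_comm]
        refine Finset.sum_congr rfl fun j _ => Finset.sum_congr rfl fun i _ => ?_
        by_cases h : i = j
        · simp [h]
        · simp [h, Ne.symm h]
      have hdbl : ∀ j, -(M j j * u n j) ≤ (∑ i ∈ Finset.univ.filter (fun i => i ≠ j), M i j) * u n j := by
        intro j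
        have h2 : -(M j j) ≤ ∑ i ∈ Finset.univ.filter (fun i => i ≠ j), M i j := by
          have h3 : ∀ i ∈ Finset.univ.filter (fun i => i ≠ j), -|M i j| ≤ M i j :=
            fun i _ => neg_abs_le _
          have := Finset.sum_le_sum h3
          rw [Finset.sum_neg_distrib] at this
          linarith [hdom j]
        calc -(M j j * u n j) = -(M j j) * u n j := by ring
          _ ≤ _ := mul_le_mul_of_nonneg_right h2 (hunn n j)
      have h4 : ∑ j, -(M j j * u n j) ≤ ∑ j, (∑ i ∈ Finset.univ.filter (fun i => i ≠ j), M i j) * u n j :=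
        Finset.sum_le_sum fun j _ => hdbl j
      have h5 : ∑ j, M j j * u n j ≤ ∑ j, M j j * u (n + 1) j :=
        Finset.sum_le_sum fun j _ => mul_le_mul_of_nonneg_left (humono n j) (hdiag j)
      have h6 : 0 ≤ ∑ j, M j j * u (n + 1) j :=
        Finset.sum_nonneg fun j _ => mul_nonneg (hdiag j) (hunn (n + 1) j)
      rw [Finset.sum_add_distrib, Finset.sum_add_distrib, hsw] at h1
      rw [Finset.sum_neg_distrib] at h4
      linarith
    have hterm : ∀ j ∈ Finset.univ, (0:ℝ) ≤ (u (n + 1) j) ^ (1 / q j) :=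
      fun j _ => Real.rpow_nonneg (hunn (n + 1) j) _
    calc (u (n + 1) i) ^ (1 / q i) ≤ ∑ j, (u (n + 1) j) ^ (1 / q j) :=
          Finset.single_le_sum hterm (Finset.mem_univ i)
      _ ≤ A := key
  set B : Fin N → ℝ := fun i => max 1 (A ^ q i) with hB
  have hubd : ∀ n i, u n i ≤ B i := by
    intro n i
    cases n with
    | zero => rw [hu0]; exact le_max_of_le_left zero_le_one
    | succ m =>
      by_cases h1 : u (m + 1) i ≤ 1
      · exact le_max_of_le_left h1
      · push_neg at h1
        apply le_max_of_le_right
        have hq' : (1 / q i) * q i = 1 := one_div_mul_cancel (hq i).ne'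
        have hx : ((u (m + 1) i) ^ (1 / q i)) ^ q i = u (m + 1) i := by
          rw [← Real.rpow_mul (hunn (m + 1) i), hq', Real.rpow_one]
        calc u (m + 1) i = ((u (m + 1) i) ^ (1 / q i)) ^ q i := hx.symm
          _ ≤ A ^ q i :=
            Real.rpow_le_rpow (Real.rpow_nonneg (hunn (m + 1) i) _) (hbd m i) (hq i).le
  have hbdd : ∀ i, BddAbove (Set.range fun n => u n i) :=
    fun i => ⟨B i, by rintro _ ⟨n, rfl⟩; exact hubd n i⟩
  set v : Fin N → ℝ := fun i => ⨆ n, u n i with hv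
  have htend : ∀ i, Filter.Tendsto (fun n => u n i) Filter.atTop (nhds (v i)) :=
    fun i => tendsto_atTop_ciSup (humono' i) (hbdd i)
  have hvpos : ∀ i, 0 < v i := by
    intro i
    have h1 : u 1 i ≤ v i := le_ciSup (hbdd i) 1
    have h2 : 0 < u 1 i := by rw [husucc 0]; exact (hGspec _ i).1
    linarith
  have hveq : ∀ i, v i ^ (1 / q i) + ∑ j, M i j * v j = a i := by
    intro i
    have htend1 : Filter.Tendsto (fun n => u (n + 1) i) Filter.atTop (nhds (v i)) :=
      (htend i).comp (Filter.tendsto_add_atTop_nat 1)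
    have ht1 : Filter.Tendsto (fun n => (u (n + 1) i) ^ (1 / q i)) Filter.atTop
        (nhds (v i ^ (1 / q i))) :=
      ((Real.continuousAt_rpow_const (v i) (1 / q i) (Or.inr (hp i).le)).tendsto).comp htend1
    have ht2 : Filter.Tendsto (fun n => M i i * u (n + 1) i) Filter.atTop
        (nhds (M i i * v i)) := htend1.const_mul _
    have ht3 : Filter.Tendsto
        (fun n => ∑ j ∈ Finset.univ.filter (fun j => j ≠ i), M i j * u n j) Filter.atTop
        (nhds (∑ j ∈ Finset.univ.filter (fun j => j ≠ i), M i j * v j)) :=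
      tendsto_finset_sum _ fun j _ => (htend j).const_mul _
    have htot := (ht1.add ht2).add ht3
    have hca : Filter.Tendsto (fun _ : ℕ => a i) Filter.atTop
        (nhds (v i ^ (1 / q i) + M i i * v i
          + ∑ j ∈ Finset.univ.filter (fun j => j ≠ i), M i j * v j)) :=
      htot.congr fun n => huiter n i
    have hlim := tendsto_nhds_unique hca tendsto_const_nhds
    have hsplit : ∑ j, M i j * v j = M i i * v i + ∑ j ∈ Finset.univ.erase i, M i j * v j :=
      (Finset.add_sum_erase _ _ (Finset.mem_univ i)).symm
    rw [Finset.filter_ne'] at hlim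
    rw [hsplit]
    linarith
  exact ⟨v, ⟨hvpos, hveq⟩, fun y hy => uniq y v hy.1 hy.2 hvpos hveq⟩
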